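/- arXiv:2404.14431 — 2 statements merged into one kernel-verified Lean document; each statement's English description precedes it below -/
import Mathlib

section
/- Let s ≥ 1, let M = H^s, and let φ ∈ M with φ ∉ πM; set β := h(φ,φ) ∈ O_{F₀}. Then there exists a standard normal basis σ₁,τ₁,…,σ_s,τ_s of M such that φ = σ₁ − (πβ/2)τ₁ and such that σ₁ + (πβ/2)τ₁, σ₂, τ₂, …, σ_s, τ_s is an O_F-basis of M(φ). Consequently, if β ≠ 0, then the O_F-length of M/(M(φ) ⊞ O_F·φ) equals 1 + val_π(β), where val_π is the valuation with val_π(π) = 1, and (M(φ) ⊗_{O_F} F) ⊞ F·φ = M ⊗_{O_F} F. -/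
/-!
Statement 1 (Corollary "normal basis and ortho" of the paper).

Setting as in the paper: `F/F₀` ramified quadratic extension of `p`-adic fields (`p` odd),
involution `σ`, uniformizer `π` with `σ π = -π`, `O = O_F` the ring of integers,
`M = H^s` the hyperbolic hermitian lattice, `φ ∈ M ∖ πM`, `β = h(φ,φ) ∈ O_{F₀}`.
-/

noncomputable section

/-- Gram matrix of `H^s` w.r.t. a standard normal basis (indexed by `Fin s × Fin 2`). -/
def hypGram {F : Type*} [Field F] (πF : F) (s : ℕ) :
    Fin s × Fin 2 → Fin s × Fin 2 → F := fun x y =>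
  if x.1 = y.1 then
    if x.2 = 0 ∧ y.2 = 1 then πF⁻¹
    else if x.2 = 1 ∧ y.2 = 0 then -πF⁻¹
    else 0
  else 0

/-- The orthogonal complement `M(φ) = {x ∈ M | h(x,φ) = 0}` as a submodule. -/
def orthoSubmodule {F O M : Type*} [Field F] [CommRing O] [Algebra O F]
    [AddCommGroup M] [Module O M] (h : M → M → F)
    (haddl : ∀ x y z : M, h (x + y) z = h x z + h y z)
    (hsmull : ∀ (a : O) (x y : M), h (a • x) y = algebraMap O F a * h x y)
    (φ : M) : Submodule O M where
  carrier := {x | h x φ = 0}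
  add_mem' := by
    intro a b ha hb
    simp only [Set.mem_setOf_eq] at *
    rw [haddl, ha, hb, add_zero]
  zero_mem' := by
    have h0 : h ((0 : O) • (0 : M)) φ = algebraMap O F 0 * h 0 φ := hsmull 0 0 φ
    simpa using h0
  smul_mem' := by
    intro a x hx
    simp only [Set.mem_setOf_eq] at *
    rw [hsmull, hx, mul_zero]

/-- `Q` has length `n` as an `O`-module (via composition series). -/
def moduleLengthEq (O Q : Type*) [Ring O] [AddCommGroup Q] [Module O Q] (n : ℕ) : Prop :=
  ∃ s : CompositionSeries (Submodule O Q), s.head = ⊥ ∧ s.last = ⊤ ∧ s.length = n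

theorem exists_basis_of_span {O M ι : Type*} [CommRing O] [IsNoetherianRing O]
    [AddCommGroup M] [Module O M] [Finite ι]
    (b : Module.Basis ι O M) (v : ι → M)
    (hv : ∀ i, b i ∈ Submodule.span O (Set.range v)) :
    ∃ b' : Module.Basis ι O M, ∀ i, b' i = v i := by
  haveI : Module.Finite O M := Module.Finite.of_basis b
  haveI : IsNoetherian O M := isNoetherian_of_isNoetherianRing_of_finite O M
  set f : M →ₗ[O] M := Module.Basis.constr b ℕ v with hf
  have hfb : ∀ i, f (b i) = v i := fun i => Module.Basis.constr_basis b ℕ v i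
  have hrange : LinearMap.range f = ⊤ := by
    rw [eq_top_iff, ← b.span_eq, Submodule.span_le]
    rintro x ⟨i, rfl⟩
    have h1 : Set.range v ⊆ (LinearMap.range f : Set M) := by
      rintro y ⟨j, rfl⟩; exact ⟨b j, hfb j⟩
    exact Submodule.span_le.mpr h1 (hv i)
  have hsurj : Function.Surjective f := LinearMap.range_eq_top.mp hrange
  have hinj : Function.Injective f := IsNoetherian.injective_of_surjective_endomorphism f hsurj
  refine ⟨b.map (LinearEquiv.ofBijective f ⟨hinj, hsurj⟩), fun i => ?_⟩
  simp [Module.Basis.map_apply, LinearEquiv.ofBijective_apply, hfb]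
  exact hfb i

theorem mem_orthoSubmodule' {F O M : Type*} [Field F] [CommRing O] [Algebra O F]
    [AddCommGroup M] [Module O M] (h : M → M → F)
    (haddl : ∀ x y z : M, h (x + y) z = h x z + h y z)
    (hsmull : ∀ (a : O) (x y : M), h (a • x) y = algebraMap O F a * h x y)
    (φ x : M) : x ∈ orthoSubmodule h haddl hsmull φ ↔ h x φ = 0 := Iff.rfl

set_option maxHeartbeats 1000000 in
theorem key
    {F O : Type*} [Field F] [CommRing O] [IsDomain O] [IsDiscreteValuationRing O]
    [Algebra O F] [IsFractionRing O F]
    (σ : F ≃+* F) (hσinv : ∀ x : F, σ (σ x) = x)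
    (hσO : ∀ a : O, ∃ b : O, σ (algebraMap O F a) = algebraMap O F b)
    (π : O) (hπ : Irreducible π)
    (hσπ : σ (algebraMap O F π) = - algebraMap O F π)
    (h2 : IsUnit (2 : O))
    {M : Type*} [AddCommGroup M] [Module O M]
    (h : M → M → F)
    (haddl : ∀ x y z : M, h (x + y) z = h x z + h y z)
    (hsmull : ∀ (a : O) (x y : M), h (a • x) y = algebraMap O F a * h x y)
    (hconj : ∀ x y : M, h y x = σ (h x y))
    (s : ℕ) (hs : 0 < s)
    (b : Module.Basis (Fin s × Fin 2) O M)
    (hb : ∀ i j, h (b i) (b j) = hypGram (algebraMap O F π) s i j)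
    (φ : M)
    (β : O) (hβ : algebraMap O F β = h φ φ)
    (hβfix : σ (algebraMap O F β) = algebraMap O F β)
    (r : Fin s × Fin 2 → O) (hr : φ = ∑ x, r x • b x)
    (hru : IsUnit (r (⟨0, hs⟩, 0))) :
    ∃ b' : Module.Basis (Fin s × Fin 2) O M,
      (∀ i j, h (b' i) (b' j) = hypGram (algebraMap O F π) s i j) ∧
      φ = b' (⟨0, hs⟩, 0) - (π * β * ((h2.unit⁻¹ : Oˣ) : O)) • b' (⟨0, hs⟩, 1) ∧
      (∀ w : {x : Fin s × Fin 2 // x ≠ (⟨0, hs⟩, (1 : Fin 2))} → M,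
        w = (fun x => if x.1 = (⟨0, hs⟩, (0 : Fin 2)) then
              b' (⟨0, hs⟩, 0) + (π * β * ((h2.unit⁻¹ : Oˣ) : O)) • b' (⟨0, hs⟩, 1)
            else b' x.1) →
        (∀ i, w i ∈ orthoSubmodule h haddl hsmull φ) ∧
        LinearIndependent O w ∧
        Submodule.span O (Set.range w) = orthoSubmodule h haddl hsmull φ) ∧
      (∀ a : ℕ, Associated (π ^ a) β →
        moduleLengthEq O
          (M ⧸ ((orthoSubmodule h haddl hsmull φ) ⊔ Submodule.span O {φ}))
          (1 + a)) ∧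
      (β ≠ 0 → ∀ x : M, ∃ k : ℕ,
        π ^ k • x ∈ (orthoSubmodule h haddl hsmull φ) ⊔ Submodule.span O {φ}) := by
  
  classical
  set A := algebraMap O F with hA
  have hAinj : Function.Injective A := IsFractionRing.injective O F
  choose σ' hσ' using hσO
  have hσ'2 : ∀ a : O, σ' (σ' a) = a := by
    intro a
    apply hAinj
    rw [← hσ' (σ' a), ← hσ' a, hσinv]
  have hπ0 : (π : O) ≠ 0 := hπ.ne_zero
  have hπF : A π ≠ 0 := fun hc => hπ0 (hAinj (by rw [hc, map_zero]))
  have hσπinv : σ ((A π)⁻¹) = -(A π)⁻¹ := by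
    rw [map_inv₀, hσπ, inv_neg]
  -- basic h lemmas
  have h0l : ∀ y : M, h 0 y = 0 := by
    intro y
    have := hsmull 0 0 y
    simpa using this
  have h0r : ∀ x : M, h x 0 = 0 := by
    intro x; rw [hconj, h0l, map_zero]
  have haddr : ∀ x y z : M, h x (y + z) = h x y + h x z := by
    intro x y z
    rw [hconj, haddl, map_add, ← hconj, ← hconj]
  have hsmulr : ∀ (a : O) (x y : M), h x (a • y) = σ (A a) * h x y := by
    intro a x y
    rw [hconj, hsmull, map_mul, ← hconj]
  have hnegl : ∀ x y : M, h (-x) y = -h x y := by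
    intro x y
    have := haddl x (-x) y
    simp only [add_neg_cancel, h0l] at this
    exact eq_neg_of_add_eq_zero_right this.symm
  have hsubl : ∀ x y z : M, h (x - y) z = h x z - h y z := by
    intro x y z
    rw [sub_eq_add_neg, haddl, hnegl, sub_eq_add_neg]
  have hnegr : ∀ x y : M, h x (-y) = -h x y := by
    intro x y
    rw [hconj, hnegl, map_neg, ← hconj]
  have hsubr : ∀ x y z : M, h x (y - z) = h x y - h x z := by
    intro x y z
    rw [sub_eq_add_neg, haddr, hnegr, sub_eq_add_neg]
  have hsuml : ∀ {ι : Type} (t : Finset ι) (f : ι → M) (y : M),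
      h (∑ i ∈ t, f i) y = ∑ i ∈ t, h (f i) y := by
    intro ι t f y
    induction t using Finset.induction_on with
    | empty => simpa using h0l y
    | insert _ _ hni ih =>
      rw [Finset.sum_insert hni, haddl, ih, Finset.sum_insert hni]
  
  have h01 : (0 : Fin 2) ≠ 1 := by decide
  have h10 : (1 : Fin 2) ≠ 0 := by decide
  -- the pairing of a general vector with basis vectors
  have pairing0 : ∀ (bb : Fin s × Fin 2 → M),
      (∀ k l, h (bb k) (bb l) = hypGram (A π) s k l) →
      ∀ (rr : Fin s × Fin 2 → O) (i : Fin s),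
      h (∑ x, rr x • bb x) (bb (i, 0)) = -(A (rr (i, 1)) * (A π)⁻¹) ∧
      h (∑ x, rr x • bb x) (bb (i, 1)) = A (rr (i, 0)) * (A π)⁻¹ := by
    intro bb hbb rr i
    have hsum : ∀ k : Fin s × Fin 2,
        h (∑ x, rr x • bb x) (bb k) = ∑ x : Fin s × Fin 2, A (rr x) * hypGram (A π) s x k := by
      intro k
      rw [hsuml]
      exact Finset.sum_congr rfl fun x _ => by rw [hsmull, hbb]
    constructor
    · rw [hsum, Fintype.sum_prod_type, Finset.sum_eq_single i]
      · simp [hypGram, Fin.sum_univ_two, h01, h10]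
      · intro i' _ hi'
        apply Finset.sum_eq_zero
        intro j' _
        simp [hypGram, hi']
      · intro hni; exact absurd (Finset.mem_univ i) hni
    · rw [hsum, Fintype.sum_prod_type, Finset.sum_eq_single i]
      · simp [hypGram, Fin.sum_univ_two, h01, h10]
      · intro i' _ hi'
        apply Finset.sum_eq_zero
        intro j' _
        simp [hypGram, hi']
      · intro hni; exact absurd (Finset.mem_univ i) hni
  -- expansion lemmas
  have hexpandl : ∀ (x y z : M) (a : O), h (x + a • y) z = h x z + A a * h y z := by
    intro x y z a; rw [haddl, hsmull]
  have hexpandr : ∀ (x z w : M) (e : O), h x (z + e • w) = h x z + σ (A e) * h x w := by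
    intro x z w e; rw [haddr, hsmulr]
  have hexpand : ∀ (x y z w : M) (a e : O),
      h (x + a • y) (z + e • w) =
        h x z + σ (A e) * h x w + A a * h y z + A a * (σ (A e) * h y w) := by
    intro x y z w a e
    rw [haddl, haddr, haddr, hsmull, hsmull, hsmulr, hsmulr]
    ring
  -- main objects
  set z0 : Fin s × Fin 2 := (⟨0, hs⟩, 0) with hz0
  set z1 : Fin s × Fin 2 := (⟨0, hs⟩, 1) with hz1
  have hz01 : z0 ≠ z1 := by simp [hz0, hz1, Prod.ext_iff, h01]
  have hz10 : z1 ≠ z0 := hz01.symm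
  have hk_other : ∀ k : Fin s × Fin 2, k ≠ z0 → k ≠ z1 → k.1 ≠ ⟨0, hs⟩ := by
    rintro ⟨i, j⟩ hk0 hk1 hi
    simp only at hi
    subst hi
    rcases (by omega : j = 0 ∨ j = 1) with rfl | rfl
    · exact hk0 rfl
    · exact hk1 rfl
  have haU : (hru.unit : O) = r z0 := hru.unit_spec
  set ainv : O := ((hru.unit⁻¹ : Oˣ) : O) with hainv
  have hainva : ainv * r z0 = 1 := by
    have e1 := hru.unit.inv_mul
    rw [haU] at e1
    exact e1
  set u : O := σ' ainv with hu
  have huA : A u = σ (A ainv) := (hσ' ainv).symm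
  have huinv : u * σ' (r z0) = 1 := by
    apply hAinj
    have e1 : A (u * σ' (r z0)) = σ (A (ainv * r z0)) := by
      rw [map_mul, map_mul, huA, ← hσ' (r z0), ← map_mul]
    rw [e1, hainva, map_one, map_one]
  set τ : M := u • b z1 with hτ
  set t2 : O := ((h2.unit⁻¹ : Oˣ) : O) with ht2
  have h2t : (2 : O) * t2 = 1 := by
    have := h2.unit.mul_inv
    rwa [h2.unit_spec] at this
  set c : O := π * β * t2 with hc
  have hAc : A c = A π * A β * A t2 := by rw [hc, map_mul, map_mul]
  have hσ2 : σ (A (2 : O)) = A (2 : O) := by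
    have e1 : (A (2 : O) : F) = 2 := by rw [map_ofNat]
    rw [e1, map_ofNat]
  have hA2t : A (2 : O) * A t2 = 1 := by rw [← map_mul, h2t, map_one]
  have hA2ne : A (2 : O) ≠ 0 := fun hc0 => by
    rw [hc0, zero_mul] at hA2t; exact zero_ne_one hA2t
  have hσt2 : σ (A t2) = A t2 := by
    have e1 : A (2 : O) * σ (A t2) = 1 := by
      have := congrArg σ hA2t
      rwa [map_mul, map_one, hσ2] at this
    exact mul_left_cancel₀ hA2ne (e1.trans hA2t.symm)
  have hσc : σ (A c) = -(A c) := by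
    rw [hAc, map_mul, map_mul, hσπ, hβfix, hσt2]
    ring
  have hct : A c * (A π)⁻¹ = A β * A t2 := by
    rw [hAc]; field_simp
  have ht2t2 : t2 + t2 = 1 := by rw [← two_mul, h2t]
  have hc_half : A c * (A π)⁻¹ + A c * (A π)⁻¹ = A β := by
    rw [hct, ← mul_add, ← map_add, ht2t2, map_one, mul_one]
  -- pairings with φ
  have hφb0 : ∀ i : Fin s, h φ (b (i, 0)) = -(A (r (i, 1)) * (A π)⁻¹) := by
    intro i; rw [hr]; exact (pairing0 b hb r i).1
  have hφb1 : ∀ i : Fin s, h φ (b (i, 1)) = A (r (i, 0)) * (A π)⁻¹ := by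
    intro i; rw [hr]; exact (pairing0 b hb r i).2
  set d : Fin s × Fin 2 → O :=
    fun k => if k.2 = 0 then σ' (r (k.1, 1)) else -σ' (r (k.1, 0)) with hd
  have hbφ : ∀ k : Fin s × Fin 2, h (b k) φ = A (d k) * (A π)⁻¹ := by
    rintro ⟨i, j⟩
    rcases (by omega : j = 0 ∨ j = 1) with rfl | rfl
    · rw [hconj, hφb0, map_neg, map_mul, hσπinv]
      simp only [hd, ← hσ', h10, if_true, if_pos rfl]
      ring
    · rw [hconj, hφb1, map_mul, hσπinv]
      have e1 : d (i, 1) = -σ' (r (i, 0)) := by simp [hd, h10]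
      rw [e1, map_neg, ← hσ']
      ring
  -- pairings with τ
  have hbτ : ∀ k : Fin s × Fin 2, k ≠ z0 → h (b k) τ = 0 := by
    intro k hk
    rw [hτ, hsmulr, hb]
    have e0 : hypGram (A π) s k z1 = 0 := by
      obtain ⟨i, j⟩ := k
      by_cases hi : i = ⟨0, hs⟩
      · subst hi
        rcases (by omega : j = 0 ∨ j = 1) with rfl | rfl
        · exact absurd hz0.symm hk
        · simp [hypGram, hz1, h10]
      · simp [hypGram, hz1, hi]
    rw [e0, mul_zero]
  have hτb : ∀ k : Fin s × Fin 2, k ≠ z0 → h τ (b k) = 0 := by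
    intro k hk
    rw [hconj, hbτ k hk, map_zero]
  have hττ : h τ τ = 0 := by
    rw [hτ, hsmull, hsmulr, hb]
    have e0 : hypGram (A π) s z1 z1 = 0 := by simp [hz1, hypGram, h10]
    rw [e0]; ring
  have hφbz1 : h φ (b z1) = A (r z0) * (A π)⁻¹ := by
    rw [hz1, hz0]; exact hφb1 _
  have hφτ : h φ τ = (A π)⁻¹ := by
    rw [hτ, hsmulr, huA, hσinv, hφbz1, ← mul_assoc, ← map_mul, hainva, map_one, one_mul]
  have hτφ : h τ φ = -(A π)⁻¹ := by
    rw [hconj φ τ, hφτ, hσπinv]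
  -- Gram computations for the new family
  have hσ₁σ₁ : h (φ + c • τ) (φ + c • τ) = 0 := by
    rw [hexpand, ← hβ, hφτ, hτφ, hττ, hσc]
    linear_combination -hc_half
  have hσ₁τ : h (φ + c • τ) τ = (A π)⁻¹ := by
    rw [hexpandl, hφτ, hττ]; ring
  have hτσ₁ : h τ (φ + c • τ) = -(A π)⁻¹ := by
    rw [hconj, hσ₁τ, hσπinv]
  have hkσ : ∀ k : Fin s × Fin 2, k ≠ z0 → h (b k + d k • τ) (φ + c • τ) = 0 := by
    intro k hk
    rw [hexpand, hbφ, hbτ k hk, hτφ, hττ]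
    ring
  have hσk : ∀ k : Fin s × Fin 2, k ≠ z0 → h (φ + c • τ) (b k + d k • τ) = 0 := by
    intro k hk
    rw [hconj, hkσ k hk, map_zero]
  have hkτ : ∀ k : Fin s × Fin 2, k ≠ z0 → h (b k + d k • τ) τ = 0 := by
    intro k hk
    rw [hexpandl, hbτ k hk, hττ]; ring
  have hτk : ∀ k : Fin s × Fin 2, k ≠ z0 → h τ (b k + d k • τ) = 0 := by
    intro k hk
    rw [hconj, hkτ k hk, map_zero]
  have hkk : ∀ k l : Fin s × Fin 2, k ≠ z0 → l ≠ z0 →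
      h (b k + d k • τ) (b l + d l • τ) = h (b k) (b l) := by
    intro k l hk hl
    rw [hexpand, hbτ k hk, hτb l hl, hττ]
    ring
  -- the new family
  set b'fam : Fin s × Fin 2 → M := fun k =>
    if k = z0 then φ + c • τ else if k = z1 then τ else b k + d k • τ with hb'fam
  have hb'fz0 : b'fam z0 = φ + c • τ := by simp [hb'fam]
  have hb'fz1 : b'fam z1 = τ := by simp [hb'fam, hz10]
  have hb'fother : ∀ k, k ≠ z0 → k ≠ z1 → b'fam k = b k + d k • τ := by
    intro k hk0 hk1; simp [hb'fam, hk0, hk1]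
  have hGz0z0 : hypGram (A π) s z0 z0 = 0 := by simp [hz0, hypGram, h01]
  have hGz0z1 : hypGram (A π) s z0 z1 = (A π)⁻¹ := by simp [hz0, hz1, hypGram]
  have hGz1z0 : hypGram (A π) s z1 z0 = -(A π)⁻¹ := by simp [hz0, hz1, hypGram, h10]
  have hGz1z1 : hypGram (A π) s z1 z1 = 0 := by simp [hz1, hypGram, h10]
  have hGleft : ∀ (i : Fin 2) (l : Fin s × Fin 2), l.1 ≠ ⟨0, hs⟩ →
      hypGram (A π) s (⟨0, hs⟩, i) l = 0 := by
    intro i l hl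
    simp [hypGram, Ne.symm hl]
  have hGright : ∀ (i : Fin 2) (l : Fin s × Fin 2), l.1 ≠ ⟨0, hs⟩ →
      hypGram (A π) s l (⟨0, hs⟩, i) = 0 := by
    intro i l hl
    simp [hypGram, hl]
  have hb'Gram : ∀ k l, h (b'fam k) (b'fam l) = hypGram (A π) s k l := by
    intro k l
    by_cases hk0 : k = z0
    · subst hk0
      by_cases hl0 : l = z0
      · subst hl0; rw [hb'fz0, hσ₁σ₁, hGz0z0]
      · by_cases hl1 : l = z1
        · subst hl1; rw [hb'fz0, hb'fz1, hσ₁τ, hGz0z1]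
        · rw [hb'fz0, hb'fother l hl0 hl1, hσk l hl0, hz0, hGleft _ _ (hk_other l hl0 hl1)]
    · by_cases hk1 : k = z1
      · subst hk1
        by_cases hl0 : l = z0
        · subst hl0; rw [hb'fz1, hb'fz0, hτσ₁, hGz1z0]
        · by_cases hl1 : l = z1
          · subst hl1; rw [hb'fz1, hττ, hGz1z1]
          · rw [hb'fz1, hb'fother l hl0 hl1, hτk l hl0, hz1,
              hGleft _ _ (hk_other l hl0 hl1)]
      · by_cases hl0 : l = z0
        · subst hl0
          rw [hb'fother k hk0 hk1, hb'fz0, hkσ k hk0, hz0,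
            hGright _ _ (hk_other k hk0 hk1)]
        · by_cases hl1 : l = z1
          · subst hl1
            rw [hb'fother k hk0 hk1, hb'fz1, hkτ k hk0, hz1,
              hGright _ _ (hk_other k hk0 hk1)]
          · rw [hb'fother k hk0 hk1, hb'fother l hl0 hl1, hkk k l hk0 hl0, hb]
  -- spanning
  have hspan : ∀ x : Fin s × Fin 2, b x ∈ Submodule.span O (Set.range b'fam) := by
    have hmτ : τ ∈ Submodule.span O (Set.range b'fam) := by
      rw [← hb'fz1]; exact Submodule.subset_span ⟨z1, rfl⟩
    have hmbz1 : b z1 ∈ Submodule.span O (Set.range b'fam) := by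
      have e1 : b z1 = σ' (r z0) • τ := by
        rw [hτ, smul_smul, mul_comm, huinv, one_smul]
      rw [e1]; exact Submodule.smul_mem _ _ hmτ
    have hmother : ∀ k, k ≠ z0 → k ≠ z1 → b k ∈ Submodule.span O (Set.range b'fam) := by
      intro k hk0 hk1
      have e1 : b k = b'fam k - d k • τ := by
        rw [hb'fother k hk0 hk1]; abel
      rw [e1]
      exact sub_mem (Submodule.subset_span ⟨k, rfl⟩) (Submodule.smul_mem _ _ hmτ)
    have hφmem : φ ∈ Submodule.span O (Set.range b'fam) := by
      have e1 : φ = b'fam z0 - c • b'fam z1 := by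
        rw [hb'fz0, hb'fz1]; abel
      rw [e1]
      exact sub_mem (Submodule.subset_span ⟨z0, rfl⟩)
        (Submodule.smul_mem _ _ (Submodule.subset_span ⟨z1, rfl⟩))
    intro x
    by_cases hx0 : x = z0
    · subst hx0
      have hsplit : r z0 • b z0 = φ - ∑ x ∈ Finset.univ.erase z0, r x • b x := by
        rw [hr, ← Finset.add_sum_erase Finset.univ _ (Finset.mem_univ z0)]
        abel
      have hsum_mem : (∑ x ∈ Finset.univ.erase z0, r x • b x) ∈
          Submodule.span O (Set.range b'fam) := by
        apply Submodule.sum_mem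
        intro x hx
        rcases eq_or_ne x z1 with rfl | hxz1
        · exact Submodule.smul_mem _ _ hmbz1
        · exact Submodule.smul_mem _ _ (hmother x (Finset.ne_of_mem_erase hx) hxz1)
      have e2 : b z0 = ainv • (r z0 • b z0) := by
        rw [smul_smul, hainva, one_smul]
      rw [e2, hsplit]
      exact Submodule.smul_mem _ _ (sub_mem hφmem hsum_mem)
    · by_cases hx1 : x = z1
      · subst hx1; exact hmbz1
      · exact hmother x hx0 hx1
  obtain ⟨b', hb'⟩ := exists_basis_of_span b b'fam hspan
  have hb'G : ∀ k l, h (b' k) (b' l) = hypGram (A π) s k l := by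
    intro k l; rw [hb', hb']; exact hb'Gram k l
  have hb'z0 : b' z0 = φ + c • τ := by rw [hb', hb'fz0]
  have hb'z1 : b' z1 = τ := by rw [hb', hb'fz1]
  have hφeq : φ = b' z0 - c • b' z1 := by rw [hb'z0, hb'z1]; abel
  
  -- pairing values in the new basis
  have hXX : h (b' z0) (b' z0) = 0 := by rw [hb'G]; exact hGz0z0
  have hXY : h (b' z0) (b' z1) = (A π)⁻¹ := by rw [hb'G]; exact hGz0z1
  have hYX : h (b' z1) (b' z0) = -(A π)⁻¹ := by rw [hb'G]; exact hGz1z0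
  have hYY : h (b' z1) (b' z1) = 0 := by rw [hb'G]; exact hGz1z1
  have hσAnegc : σ (A (-c)) = A c := by rw [map_neg, map_neg, hσc, neg_neg]
  have hsub_eq : b' z0 - c • b' z1 = b' z0 + (-c) • b' z1 := by
    rw [neg_smul, ← sub_eq_add_neg]
  have hWφ : h (b' z0 + c • b' z1) φ = 0 := by
    rw [hφeq, hsub_eq, hexpand, hXX, hXY, hYX, hYY, hσAnegc]
    ring
  have hWother : ∀ k : Fin s × Fin 2, k ≠ z0 → k ≠ z1 → h (b' k) φ = 0 := by
    intro k hk0 hk1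
    rw [hφeq, hsubr, hsmulr, hb'G, hb'G, hz0, hz1,
      hGright _ _ (hk_other k hk0 hk1), hGright _ _ (hk_other k hk0 hk1)]
    ring
  have hmemortho : ∀ x : M, x ∈ orthoSubmodule h haddl hsmull φ ↔ h x φ = 0 :=
    fun x => Iff.rfl
  -- conclusion 3
  have hconc3 : ∀ w : {x : Fin s × Fin 2 // x ≠ z1} → M,
      w = (fun x => if x.1 = z0 then b' z0 + c • b' z1 else b' x.1) →
      (∀ i, w i ∈ orthoSubmodule h haddl hsmull φ) ∧
      LinearIndependent O w ∧
      Submodule.span O (Set.range w) = orthoSubmodule h haddl hsmull φ := by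
    intro w hw
    subst hw
    have hmem : ∀ i : {x : Fin s × Fin 2 // x ≠ z1},
        (if i.1 = z0 then b' z0 + c • b' z1 else b' i.1)
          ∈ orthoSubmodule h haddl hsmull φ := by
      rintro ⟨x, hx⟩
      by_cases hx0 : x = z0
      · rw [hmemortho]
        simp only [hx0, if_pos rfl]
        exact hWφ
      · rw [hmemortho]
        simp only [if_neg hx0]
        exact hWother x hx0 hx
    -- the second basis
    set Wfam : Fin s × Fin 2 → M :=
      fun k => if k = z0 then b' z0 + c • b' z1 else b' k with hWfam
    have hWfz0 : Wfam z0 = b' z0 + c • b' z1 := by simp [hWfam]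
    have hWfother : ∀ k, k ≠ z0 → Wfam k = b' k := by
      intro k hk; simp [hWfam, hk]
    have hspan2 : ∀ x, b' x ∈ Submodule.span O (Set.range Wfam) := by
      intro x
      by_cases hx0 : x = z0
      · subst hx0
        have e1 : b' z0 = Wfam z0 - c • Wfam z1 := by
          rw [hWfz0, hWfother z1 hz10]; abel
        rw [e1]
        exact sub_mem (Submodule.subset_span ⟨z0, rfl⟩)
          (Submodule.smul_mem _ _ (Submodule.subset_span ⟨z1, rfl⟩))
      · rw [← hWfother x hx0]; exact Submodule.subset_span ⟨x, rfl⟩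
    obtain ⟨b'', hb''⟩ := exists_basis_of_span b' Wfam hspan2
    have hwcomp : (fun x : {x : Fin s × Fin 2 // x ≠ z1} =>
        if x.1 = z0 then b' z0 + c • b' z1 else b' x.1) = b'' ∘ Subtype.val := by
      funext x
      simp only [Function.comp_apply, hb'', hWfam]
    refine ⟨hmem, ?_, ?_⟩
    · rw [hwcomp]
      exact b''.linearIndependent.comp _ Subtype.val_injective
    · apply le_antisymm
      · rw [Submodule.span_le]
        rintro y ⟨i, rfl⟩
        exact hmem i
      · intro m hm
        have hmexp : m = ∑ x, b'.repr m x • b' x := (b'.sum_repr m).symm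
        have e2 : h m (b' z0) = -(A (b'.repr m z1) * (A π)⁻¹) := by
          conv_lhs => rw [hmexp]
          exact (pairing0 b' hb'G _ ⟨0, hs⟩).1
        have e3 : h m (b' z1) = A (b'.repr m z0) * (A π)⁻¹ := by
          conv_lhs => rw [hmexp]
          exact (pairing0 b' hb'G _ ⟨0, hs⟩).2
        have e1 : h m φ = (A (c * b'.repr m z0) - A (b'.repr m z1)) * (A π)⁻¹ := by
          rw [hφeq, hsubr, hsmulr, hσc, e2, e3]
          simp only [map_mul]
          ring
        have hmφ : h m φ = 0 := (hmemortho m).mp hm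
        rw [e1] at hmφ
        have heq2 : b'.repr m z1 = c * b'.repr m z0 := by
          rcases mul_eq_zero.mp hmφ with h5 | h5
          · exact (hAinj (sub_eq_zero.mp h5)).symm
          · exact absurd h5 (inv_ne_zero hπF)
        have hsplit1 : (∑ x, b'.repr m x • b' x) =
            b'.repr m z0 • b' z0 + (b'.repr m z1 • b' z1 +
              ∑ x ∈ (Finset.univ.erase z0).erase z1, b'.repr m x • b' x) := by
          rw [← Finset.add_sum_erase Finset.univ _ (Finset.mem_univ z0),
            ← Finset.add_sum_erase _ _
              (Finset.mem_erase.mpr ⟨hz10, Finset.mem_univ z1⟩)]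
        have hfinal : m = b'.repr m z0 • (b' z0 + c • b' z1) +
            ∑ x ∈ (Finset.univ.erase z0).erase z1, b'.repr m x • b' x := by
          conv_lhs => rw [hmexp]
          rw [hsplit1, heq2, smul_add, smul_smul, mul_comm c (b'.repr m z0)]
          abel
        rw [hfinal]
        apply Submodule.add_mem
        · apply Submodule.smul_mem
          apply Submodule.subset_span
          exact ⟨⟨z0, hz01⟩, by exact if_pos rfl⟩
        · apply Submodule.sum_mem
          intro x hx
          obtain ⟨hxz1, hx2⟩ := Finset.mem_erase.mp hx
          obtain ⟨hxz0, _⟩ := Finset.mem_erase.mp hx2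
          apply Submodule.smul_mem
          apply Submodule.subset_span
          exact ⟨⟨x, hxz1⟩, by exact if_neg hxz0⟩

  -- shared facts about S = M(φ) ⊔ Oφ
  set Sm : Submodule O M := orthoSubmodule h haddl hsmull φ ⊔ Submodule.span O {φ} with hSmdef
  obtain ⟨hWmem, -, hWspan⟩ := hconc3 _ rfl
  have hWv_ortho : b' z0 + c • b' z1 ∈ orthoSubmodule h haddl hsmull φ := by
    have := hWmem ⟨z0, hz01⟩
    simpa only [if_pos rfl, ↓reduceIte] using this
  have hother_ortho : ∀ k, k ≠ z0 → k ≠ z1 →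
      b' k ∈ orthoSubmodule h haddl hsmull φ := by
    intro k hk0 hk1
    have := hWmem ⟨k, hk1⟩
    simpa only [if_neg hk0] using this
  have hφS : φ ∈ Sm := Submodule.mem_sup_right (Submodule.mem_span_singleton_self φ)
  have hWvS : b' z0 + c • b' z1 ∈ Sm := Submodule.mem_sup_left hWv_ortho
  have ht2two : t2 * 2 = 1 := by rw [mul_comm]; exact h2t
  have hb'z0S : b' z0 ∈ Sm := by
    have e1 : (b' z0 + c • b' z1) + φ = (2 : O) • b' z0 := by
      rw [hφeq, two_smul]; abel
    have e2 : b' z0 = t2 • ((b' z0 + c • b' z1) + φ) := by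
      rw [e1, smul_smul, ht2two, one_smul]
    rw [e2]
    exact Submodule.smul_mem _ _ (Submodule.add_mem _ hWvS hφS)
  have hcz1S : c • b' z1 ∈ Sm := by
    have e1 : (b' z0 + c • b' z1) - φ = (2 : O) • (c • b' z1) := by
      rw [hφeq, two_smul]; abel
    have e2 : c • b' z1 = t2 • ((b' z0 + c • b' z1) - φ) := by
      rw [e1, smul_smul, ht2two, one_smul]
    rw [e2]
    exact Submodule.smul_mem _ _ (Submodule.sub_mem _ hWvS hφS)
  have hcoordWv : b'.repr (b' z0 + c • b' z1) z1 = c := by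
    rw [map_add, map_smul, Finsupp.add_apply, Finsupp.smul_apply, Module.Basis.repr_self,
      Module.Basis.repr_self, Finsupp.single_apply, Finsupp.single_apply, if_neg hz01, if_pos rfl]
    simp
  have hcoordφ : b'.repr φ z1 = -c := by
    rw [hφeq, map_sub, map_smul, Finsupp.sub_apply, Finsupp.smul_apply, Module.Basis.repr_self,
      Module.Basis.repr_self, Finsupp.single_apply, Finsupp.single_apply, if_neg hz01, if_pos rfl]
    simp
  have hcoordb' : ∀ k, k ≠ z1 → b'.repr (b' k) z1 = 0 := by
    intro k hk
    rw [Module.Basis.repr_self, Finsupp.single_apply, if_neg hk]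
  have hSiff : ∀ m : M, m ∈ Sm ↔ c ∣ b'.repr m z1 := by
    intro m
    constructor
    · intro hm
      have hle : Sm ≤ Submodule.comap (b'.coord z1) (Ideal.span {c}) := by
        rw [hSmdef]
        apply sup_le
        · rw [← hWspan, Submodule.span_le]
          rintro y ⟨i, rfl⟩
          rw [SetLike.mem_coe, Submodule.mem_comap, Module.Basis.coord_apply]
          by_cases hi0 : i.1 = z0
          · rw [show (fun x : {x : Fin s × Fin 2 // x ≠ z1} =>
                if x.1 = z0 then b' z0 + c • b' z1 else b' x.1) i
                = b' z0 + c • b' z1 from if_pos hi0, hcoordWv]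
            exact Ideal.mem_span_singleton_self c
          · rw [show (fun x : {x : Fin s × Fin 2 // x ≠ z1} =>
                if x.1 = z0 then b' z0 + c • b' z1 else b' x.1) i
                = b' i.1 from if_neg hi0, hcoordb' i.1 i.2]
            exact zero_mem _
        · rw [Submodule.span_le, Set.singleton_subset_iff]
          rw [SetLike.mem_coe, Submodule.mem_comap, Module.Basis.coord_apply, hcoordφ]
          exact neg_mem (Ideal.mem_span_singleton_self c)
      have := hle hm
      rw [Submodule.mem_comap, Module.Basis.coord_apply] at this
      exact Ideal.mem_span_singleton.mp this
    · rintro ⟨q, hq⟩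
      have hmexp : m = ∑ x, b'.repr m x • b' x := (b'.sum_repr m).symm
      have hsplit1 : (∑ x, b'.repr m x • b' x) =
          b'.repr m z0 • b' z0 + (b'.repr m z1 • b' z1 +
            ∑ x ∈ (Finset.univ.erase z0).erase z1, b'.repr m x • b' x) := by
        rw [← Finset.add_sum_erase Finset.univ _ (Finset.mem_univ z0),
          ← Finset.add_sum_erase _ _ (Finset.mem_erase.mpr ⟨hz10, Finset.mem_univ z1⟩)]
      rw [hmexp, hsplit1, hq]
      apply Submodule.add_mem
      · exact Submodule.smul_mem _ _ hb'z0S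
      apply Submodule.add_mem
      · rw [mul_comm c q, ← smul_smul]
        exact Submodule.smul_mem _ _ hcz1S
      · apply Submodule.sum_mem
        intro x hx
        obtain ⟨hxz1, hx2⟩ := Finset.mem_erase.mp hx
        obtain ⟨hxz0, -⟩ := Finset.mem_erase.mp hx2
        exact Submodule.smul_mem _ _
          (Submodule.mem_sup_left (hother_ortho x hxz0 hxz1))
  have hpow_mem : ∀ e : O, (e • b' z1 ∈ Sm) ↔ c ∣ e := by
    intro e
    rw [hSiff]
    have e1 : b'.repr (e • b' z1) z1 = e := by
      rw [map_smul, Finsupp.smul_apply, Module.Basis.repr_self, Finsupp.single_eq_same,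
        smul_eq_mul, mul_one]
    rw [e1]
  refine ⟨b', hb'G, hφeq, hconc3, ?_, ?_⟩
  · -- conclusion 4 : length of the quotient
    intro a0 hassoc
    obtain ⟨v, hv⟩ := hassoc
    have ht2unit : IsUnit t2 := (h2.unit⁻¹).isUnit
    have hεu : IsUnit ((v : O) * t2) := (Units.isUnit v).mul ht2unit
    have hεuv : (hεu.unit : O) = (v : O) * t2 := hεu.unit_spec
    have hcval : c = π ^ (a0 + 1) * ↑hεu.unit := by
      rw [hεuv, hc, ← hv]; ring
    have hπa1 : π ^ (a0 + 1) = c * ↑hεu.unit⁻¹ := by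
      rw [hcval, mul_assoc, hεu.unit.mul_inv, mul_one]
    have hcov : ∀ n : ℕ, n ≤ a0 →
        Submodule.span O {(Submodule.Quotient.mk (π ^ (n+1) • b' z1) : M ⧸ Sm)} ⋖
        Submodule.span O {(Submodule.Quotient.mk (π ^ n • b' z1) : M ⧸ Sm)} := by
      intro n hn
      have hπg : (Submodule.Quotient.mk (π ^ (n+1) • b' z1) : M ⧸ Sm)
          = π • (Submodule.Quotient.mk (π ^ n • b' z1) : M ⧸ Sm) := by
        rw [← Submodule.Quotient.mk_smul, smul_smul, ← pow_succ']
      have hAle : Submodule.span O {(Submodule.Quotient.mk (π ^ (n+1) • b' z1) : M ⧸ Sm)} ≤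
          Submodule.span O {(Submodule.Quotient.mk (π ^ n • b' z1) : M ⧸ Sm)} := by
        rw [hπg, Submodule.span_le, Set.singleton_subset_iff]
        exact Submodule.smul_mem _ _ (Submodule.mem_span_singleton_self _)
      have hglt : (Submodule.Quotient.mk (π ^ n • b' z1) : M ⧸ Sm) ∉
          Submodule.span O {(Submodule.Quotient.mk (π ^ (n+1) • b' z1) : M ⧸ Sm)} := by
        intro hmem
        rw [hπg] at hmem
        obtain ⟨x, hx⟩ := Submodule.mem_span_singleton.mp hmem
        have e1 : ((1 : O) - x * π) • (Submodule.Quotient.mk (π ^ n • b' z1) : M ⧸ Sm) = 0 := by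
          rw [sub_smul, one_smul, mul_smul, hx, sub_self]
        rw [← Submodule.Quotient.mk_smul, Submodule.Quotient.mk_eq_zero, smul_smul] at e1
        have hdvd : c ∣ ((1:O) - x * π) * π ^ n := (hpow_mem _).mp e1
        have hu1 : IsUnit ((1:O) - x * π) := by
          rcases IsLocalRing.isUnit_or_isUnit_one_sub_self (x * π) with hcase | hcase
          · exact absurd (isUnit_of_mul_isUnit_right hcase) hπ.not_isUnit
          · exact hcase
        have hd2 : π ^ (a0+1) ∣ ((1:O) - x * π) * π ^ n :=
          dvd_trans ⟨↑hεu.unit, hcval⟩ hdvd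
        obtain ⟨w, hw⟩ := hd2
        have hd3 : π ^ (a0+1) ∣ π ^ n := by
          refine ⟨↑hu1.unit⁻¹ * w, ?_⟩
          have e4 := hu1.unit.inv_mul
          rw [hu1.unit_spec] at e4
          have e2 : (↑hu1.unit⁻¹ : O) * (((1:O) - x * π) * π ^ n) = π ^ n := by
            rw [← mul_assoc, e4, one_mul]
          rw [← e2, hw]; ring
        have := (pow_dvd_pow_iff hπ0 hπ.not_isUnit).mp hd3
        omega
      constructor
      · exact lt_of_le_of_ne hAle fun heq =>
          hglt (by rw [heq]; exact Submodule.mem_span_singleton_self _)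
      · intro C hAC hCB
        have hCle := hCB.le
        obtain ⟨y, hyC, hyA⟩ := SetLike.exists_of_lt hAC
        obtain ⟨ty, hty⟩ := Submodule.mem_span_singleton.mp (hCle hyC)
        by_cases hdv : π ∣ ty
        · obtain ⟨ty', rfl⟩ := hdv
          apply hyA
          rw [hπg, ← hty, mul_comm π ty', mul_smul]
          exact Submodule.smul_mem _ _ (Submodule.mem_span_singleton_self _)
        · have hty_unit : IsUnit ty := by
            by_contra hnu
            apply hdv
            have hmax := (IsDiscreteValuationRing.irreducible_iff_uniformizer π).mp hπ
            have hmem2 : ty ∈ IsLocalRing.maximalIdeal O :=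
              (IsLocalRing.mem_maximalIdeal ty).mpr hnu
            rw [hmax] at hmem2
            exact Ideal.mem_span_singleton.mp hmem2
          have hgC : (Submodule.Quotient.mk (π ^ n • b' z1) : M ⧸ Sm) ∈ C := by
            have e4 := hty_unit.unit.inv_mul
            rw [hty_unit.unit_spec] at e4
            have e3 : (Submodule.Quotient.mk (π ^ n • b' z1) : M ⧸ Sm)
                = ((hty_unit.unit⁻¹ : Oˣ) : O) • y := by
              rw [← hty, smul_smul, e4, one_smul]
            rw [e3]
            exact C.smul_mem _ hyC
          exact absurd (Submodule.span_le.mpr (Set.singleton_subset_iff.mpr hgC)) hCB.not_ge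
    refine ⟨⟨1 + a0, fun k => Submodule.span O
        {(Submodule.Quotient.mk (π ^ (1 + a0 - k.val) • b' z1) : M ⧸ Sm)}, ?_⟩, ?_, ?_, rfl⟩
    · intro i
      have hi := i.isLt
      have e1 : 1 + a0 - (Fin.castSucc i).val = (a0 - i.val) + 1 := by
        simp only [Fin.coe_castSucc]; omega
      have e2 : 1 + a0 - (i.succ).val = a0 - i.val := by
        simp only [Fin.val_succ]; omega
      show Submodule.span O _ ⋖ Submodule.span O _
      rw [e1, e2]
      exact hcov (a0 - i.val) (by omega)
    · show Submodule.span O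
          {(Submodule.Quotient.mk (π ^ (1 + a0 - (0 : Fin (1+a0+1)).val) • b' z1) : M ⧸ Sm)} = ⊥
      have e0 : 1 + a0 - (0 : Fin (1+a0+1)).val = a0 + 1 := by simp; omega
      rw [e0]
      have e1 : (Submodule.Quotient.mk (π ^ (a0+1) • b' z1) : M ⧸ Sm) = 0 := by
        rw [Submodule.Quotient.mk_eq_zero]
        exact (hpow_mem _).mpr ⟨↑hεu.unit⁻¹, hπa1⟩
      rw [e1, Submodule.span_zero_singleton]
    · show Submodule.span O
          {(Submodule.Quotient.mk (π ^ (1 + a0 - (Fin.last (1+a0)).val) • b' z1) : M ⧸ Sm)} = ⊤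
      have e0 : 1 + a0 - (Fin.last (1+a0)).val = 0 := by simp
      rw [e0, pow_zero, one_smul, eq_top_iff]
      rintro q -
      obtain ⟨m, rfl⟩ := Submodule.Quotient.mk_surjective Sm q
      have hrm : m - (b'.repr m z1) • b' z1 ∈ Sm := by
        rw [hSiff, map_sub, map_smul, Finsupp.sub_apply, Finsupp.smul_apply, Module.Basis.repr_self,
          Finsupp.single_eq_same, smul_eq_mul, mul_one, sub_self]
        exact dvd_zero c
      have e1 : (Submodule.Quotient.mk m : M ⧸ Sm)
          = (b'.repr m z1) • (Submodule.Quotient.mk (b' z1) : M ⧸ Sm) := by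
        have e2 : (Submodule.Quotient.mk (m - (b'.repr m z1) • b' z1) : M ⧸ Sm) = 0 :=
          (Submodule.Quotient.mk_eq_zero _).mpr hrm
        rw [Submodule.Quotient.mk_sub, Submodule.Quotient.mk_smul] at e2
        exact sub_eq_zero.mp e2
      rw [e1]
      exact Submodule.smul_mem _ _ (Submodule.mem_span_singleton_self _)
  · -- conclusion 5
    intro hβ0 x
    have ht2ne : t2 ≠ 0 := by
      intro h0
      rw [h0, mul_zero] at h2t
      exact zero_ne_one h2t
    have hc0 : c ≠ 0 := by
      rw [hc]
      exact mul_ne_zero (mul_ne_zero hπ0 hβ0) ht2ne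
    obtain ⟨n, v, hv⟩ := IsDiscreteValuationRing.eq_unit_mul_pow_irreducible hc0 hπ
    refine ⟨n, ?_⟩
    rw [hSiff, map_smul, Finsupp.smul_apply, smul_eq_mul]
    have e1 : π ^ n = c * ↑v⁻¹ := by
      rw [hv, mul_comm (v : O) (π ^ n), mul_assoc, v.mul_inv, mul_one]
    rw [e1, mul_assoc]
    exact dvd_mul_right c _


set_option maxHeartbeats 1000000 in
theorem stmt_1
    -- the ramified quadratic setting
    {F O : Type*} [Field F] [CommRing O] [IsDomain O] [IsDiscreteValuationRing O]
    [Algebra O F] [IsFractionRing O F]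
    (σ : F ≃+* F) (hσinv : ∀ x : F, σ (σ x) = x) (hσne : σ ≠ RingEquiv.refl F)
    (hσO : ∀ a : O, ∃ b : O, σ (algebraMap O F a) = algebraMap O F b)
    (π : O) (hπ : Irreducible π)
    (hσπ : σ (algebraMap O F π) = - algebraMap O F π)
    (h2 : IsUnit (2 : O))
    -- the hermitian lattice M = H^s
    {M : Type*} [AddCommGroup M] [Module O M]
    (h : M → M → F)
    (haddl : ∀ x y z : M, h (x + y) z = h x z + h y z)
    (hsmull : ∀ (a : O) (x y : M), h (a • x) y = algebraMap O F a * h x y)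
    (hconj : ∀ x y : M, h y x = σ (h x y))
    (s : ℕ) (hs : 0 < s)
    (b : Module.Basis (Fin s × Fin 2) O M)
    (hb : ∀ i j, h (b i) (b j) = hypGram (algebraMap O F π) s i j)
    -- φ ∈ M ∖ πM and β := h(φ,φ) ∈ O_{F₀}
    (φ : M) (hφ : ¬ ∃ m : M, φ = π • m)
    (β : O) (hβ : algebraMap O F β = h φ φ)
    (hβfix : σ (algebraMap O F β) = algebraMap O F β) :
    -- conclusion
    ∃ b' : Module.Basis (Fin s × Fin 2) O M,
      (∀ i j, h (b' i) (b' j) = hypGram (algebraMap O F π) s i j) ∧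
      -- φ = σ₁ - (πβ/2)·τ₁
      φ = b' (⟨0, hs⟩, 0) - (π * β * ((h2.unit⁻¹ : Oˣ) : O)) • b' (⟨0, hs⟩, 1) ∧
      -- σ₁ + (πβ/2)·τ₁, σ₂, τ₂, …, σ_s, τ_s is an O-basis of M(φ)
      (∀ w : {x : Fin s × Fin 2 // x ≠ (⟨0, hs⟩, (1 : Fin 2))} → M,
        w = (fun x => if x.1 = (⟨0, hs⟩, (0 : Fin 2)) then
              b' (⟨0, hs⟩, 0) + (π * β * ((h2.unit⁻¹ : Oˣ) : O)) • b' (⟨0, hs⟩, 1)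
            else b' x.1) →
        (∀ i, w i ∈ orthoSubmodule h haddl hsmull φ) ∧
        LinearIndependent O w ∧
        Submodule.span O (Set.range w) = orthoSubmodule h haddl hsmull φ) ∧
      -- if β ≠ 0, the colength of M(φ) ⊞ O·φ in M is 1 + val_π(β)
      (∀ a : ℕ, Associated (π ^ a) β →
        moduleLengthEq O
          (M ⧸ ((orthoSubmodule h haddl hsmull φ) ⊔ Submodule.span O {φ}))
          (1 + a)) ∧
      -- and (M(φ) ⊗ F) ⊞ F·φ = M ⊗ F
      (β ≠ 0 → ∀ x : M, ∃ k : ℕ,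
        π ^ k • x ∈ (orthoSubmodule h haddl hsmull φ) ⊔ Submodule.span O {φ}) := by
  classical
  have h01 : (0 : Fin 2) ≠ 1 := by decide
  have h10 : (1 : Fin 2) ≠ 0 := by decide
  have h0l : ∀ y : M, h 0 y = 0 := fun y => by simpa using hsmull 0 0 y
  have hnegl : ∀ x y : M, h (-x) y = -h x y := by
    intro x y
    have e0 := haddl x (-x) y
    simp only [add_neg_cancel, h0l] at e0
    exact eq_neg_of_add_eq_zero_right e0.symm
  have hnegr : ∀ x y : M, h x (-y) = -h x y := by
    intro x y; rw [hconj, hnegl, map_neg, ← hconj]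
  -- find a unit coordinate
  have hexists : ∃ x₀ : Fin s × Fin 2, IsUnit (b.repr φ x₀) := by
    by_contra hall
    push_neg at hall
    apply hφ
    have hdvd : ∀ x, π ∣ b.repr φ x := by
      intro x
      have hmax := (IsDiscreteValuationRing.irreducible_iff_uniformizer π).mp hπ
      have hmem : b.repr φ x ∈ IsLocalRing.maximalIdeal O :=
        (IsLocalRing.mem_maximalIdeal _).mpr (hall x)
      rw [hmax] at hmem
      exact Ideal.mem_span_singleton.mp hmem
    choose m hm using hdvd
    refine ⟨∑ x, m x • b x, ?_⟩
    rw [Finset.smul_sum]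
    conv_lhs => rw [← b.sum_repr φ]
    apply Finset.sum_congr rfl
    intro x _
    rw [hm x, mul_smul]
  obtain ⟨⟨i₀, j₀⟩, hx₀⟩ := hexists
  set e : Fin s ≃ Fin s := Equiv.swap (⟨0, hs⟩ : Fin s) i₀ with he
  have hee : ∀ i, e (e i) = i := fun i => Equiv.swap_apply_self _ _ i
  have heinj : ∀ {i j : Fin s}, e i = e j → i = j := fun hij => e.injective hij
  have he0 : e ⟨0, hs⟩ = i₀ := Equiv.swap_apply_left _ _
  rcases (by omega : j₀ = 0 ∨ j₀ = 1) with rfl | rfl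
  · -- j₀ = 0
    set b₀fam : Fin s × Fin 2 → M := fun k => b (e k.1, k.2) with hb₀fam
    have hspan0 : ∀ x : Fin s × Fin 2, b x ∈ Submodule.span O (Set.range b₀fam) := by
      intro x
      have e1 : b x = b₀fam (e x.1, x.2) := by simp [hb₀fam, hee]
      rw [e1]; exact Submodule.subset_span ⟨_, rfl⟩
    obtain ⟨b₀, hb₀⟩ := exists_basis_of_span b b₀fam hspan0
    have hb₀G : ∀ i j, h (b₀ i) (b₀ j) = hypGram (algebraMap O F π) s i j := by
      intro i j
      rw [hb₀, hb₀]
      have e1 : b₀fam i = b (e i.1, i.2) := by simp [hb₀fam]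
      have e2 : b₀fam j = b (e j.1, j.2) := by simp [hb₀fam]
      rw [e1, e2, hb]
      have e3 : (e i.1 = e j.1) = (i.1 = j.1) :=
        propext ⟨fun hh => heinj hh, fun hh => by rw [hh]⟩
      simp [hypGram, e3]
    have hr₀ : φ = ∑ x, (fun k : Fin s × Fin 2 => b.repr φ (e k.1, k.2)) x • b₀ x := by
      calc φ = ∑ y, b.repr φ y • b y := (b.sum_repr φ).symm
        _ = ∑ x : Fin s × Fin 2, b.repr φ (e x.1, x.2) • b (e x.1, x.2) :=
            (Fintype.sum_equiv (Equiv.prodCongr e (Equiv.refl (Fin 2)))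
              (fun x => b.repr φ (e x.1, x.2) • b (e x.1, x.2))
              (fun y => b.repr φ y • b y) (fun x => rfl)).symm
        _ = ∑ x, (fun k : Fin s × Fin 2 => b.repr φ (e k.1, k.2)) x • b₀ x := by
            apply Finset.sum_congr rfl
            intro x _
            rw [hb₀]
    have hr₀u : IsUnit ((fun k : Fin s × Fin 2 => b.repr φ (e k.1, k.2))
        ((⟨0, hs⟩ : Fin s), (0 : Fin 2))) := by
      simpa [he0] using hx₀
    exact key σ hσinv hσO π hπ hσπ h2 h haddl hsmull hconj s hs b₀ hb₀G φ β hβ hβfix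
      _ hr₀ hr₀u
  · -- j₀ = 1
    set b₀fam : Fin s × Fin 2 → M := fun k =>
      if k.1 = ⟨0, hs⟩ then (if k.2 = 0 then b (i₀, 1) else -(b (i₀, 0)))
      else b (e k.1, k.2) with hb₀fam
    have hb₀f00 : b₀fam (⟨0, hs⟩, 0) = b (i₀, 1) := by simp [hb₀fam]
    have hb₀f01 : b₀fam (⟨0, hs⟩, 1) = -(b (i₀, 0)) := by simp [hb₀fam, h10]
    have hb₀fo : ∀ k : Fin s × Fin 2, k.1 ≠ ⟨0, hs⟩ → b₀fam k = b (e k.1, k.2) := by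
      intro k hk; simp [hb₀fam, hk]
    have henz : ∀ i : Fin s, i ≠ i₀ → e i ≠ ⟨0, hs⟩ := by
      intro i hi hc
      exact hi (heinj (by rw [hc, ← he0, hee]))
    have hnei : ∀ l1 : Fin s, l1 ≠ ⟨0, hs⟩ → e l1 ≠ i₀ := by
      intro l1 hl hc
      exact hl (heinj (hc.trans he0.symm))
    have hspan0 : ∀ x : Fin s × Fin 2, b x ∈ Submodule.span O (Set.range b₀fam) := by
      rintro ⟨i, j⟩
      by_cases hii : i = i₀
      · rcases (by omega : j = 0 ∨ j = 1) with rfl | rfl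
        · have e2 : b (i, 0) = -b₀fam (⟨0, hs⟩, 1) := by rw [hb₀f01, neg_neg, hii]
          rw [e2]; exact neg_mem (Submodule.subset_span ⟨_, rfl⟩)
        · rw [hii, ← hb₀f00]; exact Submodule.subset_span ⟨_, rfl⟩
      · have e2 : b₀fam (e i, j) = b (i, j) := by
          rw [hb₀fo (e i, j) (henz i hii)]; simp [hee]
        rw [← e2]; exact Submodule.subset_span ⟨_, rfl⟩
    obtain ⟨b₀, hb₀⟩ := exists_basis_of_span b b₀fam hspan0
    have hb₀G : ∀ k l, h (b₀ k) (b₀ l) = hypGram (algebraMap O F π) s k l := by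
      intro k l
      rw [hb₀, hb₀]
      obtain ⟨k1, k2⟩ := k
      obtain ⟨l1, l2⟩ := l
      by_cases hk : k1 = ⟨0, hs⟩ <;> by_cases hl : l1 = ⟨0, hs⟩
      · subst hk; subst hl
        rcases (by omega : k2 = 0 ∨ k2 = 1) with rfl | rfl <;>
          rcases (by omega : l2 = 0 ∨ l2 = 1) with rfl | rfl
        · rw [hb₀f00, hb]
          simp [hypGram, h01, h10]
        · rw [hb₀f00, hb₀f01, hnegr, hb]
          simp [hypGram, h01, h10]
        · rw [hb₀f01, hb₀f00, hnegl, hb]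
          simp [hypGram, h01, h10]
        · rw [hb₀f01, hnegl, hnegr, hb]
          simp [hypGram, h01, h10]
      · subst hk
        have hne : e l1 ≠ i₀ := hnei l1 hl
        have hG0 : hypGram (algebraMap O F π) s ((⟨0, hs⟩ : Fin s), k2) (l1, l2) = 0 := by
          simp [hypGram, Ne.symm hl]
        rw [hb₀fo (l1, l2) hl, hG0]
        rcases (by omega : k2 = 0 ∨ k2 = 1) with rfl | rfl
        · rw [hb₀f00, hb]
          simp [hypGram, Ne.symm hne]
        · rw [hb₀f01, hnegl, hb]
          simp [hypGram, Ne.symm hne]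
      · subst hl
        have hne : e k1 ≠ i₀ := hnei k1 hk
        have hG0 : hypGram (algebraMap O F π) s (k1, k2) ((⟨0, hs⟩ : Fin s), l2) = 0 := by
          simp [hypGram, hk]
        rw [hb₀fo (k1, k2) hk, hG0]
        rcases (by omega : l2 = 0 ∨ l2 = 1) with rfl | rfl
        · rw [hb₀f00, hb]
          simp [hypGram, hne]
        · rw [hb₀f01, hnegr, hb]
          simp [hypGram, hne]
      · rw [hb₀fo (k1, k2) hk, hb₀fo (l1, l2) hl, hb]
        have e3 : (e k1 = e l1) = (k1 = l1) :=
          propext ⟨fun hh => heinj hh, fun hh => by rw [hh]⟩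
        simp [hypGram, e3]
    set r₀ : Fin s × Fin 2 → O := fun k =>
      if k.1 = ⟨0, hs⟩ then (if k.2 = 0 then b.repr φ (i₀, 1) else -(b.repr φ (i₀, 0)))
      else b.repr φ (e k.1, k.2) with hr₀def
    have hr₀ : φ = ∑ x, r₀ x • b₀ x := by
      have step2 : (∑ x, r₀ x • b₀fam x) = ∑ x, r₀ x • b₀ x :=
        Finset.sum_congr rfl fun x _ => by rw [hb₀]
      rw [← step2]
      calc φ = ∑ y, b.repr φ y • b y := (b.sum_repr φ).symm
        _ = ∑ x, r₀ x • b₀fam x := ?_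
      rw [Fintype.sum_prod_type, Fintype.sum_prod_type]
      refine (Fintype.sum_equiv e
        (fun i => ∑ j : Fin 2, r₀ (i, j) • b₀fam (i, j))
        (fun i => ∑ j : Fin 2, b.repr φ (i, j) • b (i, j)) ?_).symm
      intro i
      by_cases hii : i = ⟨0, hs⟩
      · subst hii
        rw [he0]
        simp only [Fin.sum_univ_two, hr₀def, hb₀f00, hb₀f01]
        simp [h10, smul_neg, neg_smul]
        abel
      · simp only [Fin.sum_univ_two]
        rw [hb₀fo (i, 0) hii, hb₀fo (i, 1) hii]
        simp [hr₀def, hii]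
    have hr₀u : IsUnit (r₀ ((⟨0, hs⟩ : Fin s), (0 : Fin 2))) := by
      simpa [hr₀def] using hx₀
    exact key σ hσinv hσO π hπ hσπ h2 h haddl hsmull hconj s hs b₀ hb₀G φ β hβ hβfix
      r₀ hr₀ hr₀u
end
end

section
/- Let s ≥ 1, let M = H^s, let d ≥ 1, and let x ∈ M with h(x,x) ∈ O_{F₀}^×. Then for every y ∈ M with h(y,x) ∈ π^{2d−1}O_F there exists z ∈ M(x) = {w ∈ M : h(w,x) = 0} with y − z ∈ π^{2d}M. Consequently, the natural map M(x)/π^{2d}M(x) → M/π^{2d}M is injective with image exactly the set of classes ȳ ∈ M/π^{2d}M whose pairing with the class of x vanishes in π^{−1}O_F/π^{2d−1}O_F. -/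
/-!
Statement 4 (lifting orthogonality, from the proof of the analytic reduction):
for `M = H^s` and `x ∈ M` of unit norm, any `y` with `h(y,x) ∈ π^{2d-1}O_F` is congruent
mod `π^{2d}M` to an element of `M(x)`; hence `M(x)/π^{2d}M(x) → M/π^{2d}M` is injective
with image the classes pairing to zero with `x`.
-/

noncomputable section

theorem stmt_4
    -- the ramified quadratic setting
    {F O : Type*} [Field F] [CommRing O] [IsDomain O] [IsDiscreteValuationRing O]
    [Algebra O F] [IsFractionRing O F]
    (σ : F ≃+* F) (hσinv : ∀ x : F, σ (σ x) = x) (hσne : σ ≠ RingEquiv.refl F)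
    (hσO : ∀ a : O, ∃ b : O, σ (algebraMap O F a) = algebraMap O F b)
    (π : O) (hπ : Irreducible π)
    (hσπ : σ (algebraMap O F π) = - algebraMap O F π)
    (h2 : IsUnit (2 : O))
    -- the hermitian lattice M = H^s
    {M : Type*} [AddCommGroup M] [Module O M]
    (h : M → M → F)
    (haddl : ∀ x y z : M, h (x + y) z = h x z + h y z)
    (hsmull : ∀ (a : O) (x y : M), h (a • x) y = algebraMap O F a * h x y)
    (hconj : ∀ x y : M, h y x = σ (h x y))
    (s : ℕ) (hs : 1 ≤ s)
    (b : Module.Basis (Fin s × Fin 2) O M)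
    (hb : ∀ i j, h (b i) (b j) = hypGram (algebraMap O F π) s i j)
    -- d ≥ 1 and x ∈ M with h(x,x) ∈ O_{F₀}^×
    (d : ℕ) (hd : 1 ≤ d)
    (x : M) (hx : ∃ u : O, IsUnit u ∧ algebraMap O F u = h x x) :
    -- every y with h(y,x) ∈ π^{2d-1}O_F is congruent mod π^{2d}M to an element of M(x)
    (∀ y : M,
      (∃ a : O, h y x = algebraMap O F (π ^ (2 * d - 1)) * algebraMap O F a) →
      ∃ z : M, h z x = 0 ∧ ∃ m : M, y - z = π ^ (2 * d) • m) ∧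
    -- injectivity of M(x)/π^{2d}M(x) → M/π^{2d}M
    (∀ z : M, h z x = 0 → (∃ m : M, z = π ^ (2 * d) • m) →
      ∃ w : M, h w x = 0 ∧ z = π ^ (2 * d) • w) ∧
    -- the image consists exactly of the classes ȳ pairing to zero with x̄
    (∀ y : M,
      (∃ z : M, h z x = 0 ∧ ∃ m : M, y - z = π ^ (2 * d) • m) ↔
      (∃ a : O, h y x = algebraMap O F (π ^ (2 * d - 1)) * algebraMap O F a)) := by

  classical
  have hinj : Function.Injective (algebraMap O F) := IsFractionRing.injective O F
  have hπ0 : π ≠ 0 := hπ.ne_zero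
  have hπF0 : algebraMap O F π ≠ 0 := fun hh => hπ0 (hinj (by simpa using hh))
  -- the involution restricted to O
  choose σh hσh using hσO
  have σmul : ∀ a c : O, σh (a * c) = σh a * σh c := by
    intro a c; apply hinj
    rw [← hσh, map_mul, map_mul σ, hσh, hσh, map_mul]
  have σone : σh 1 = 1 := by
    apply hinj; rw [← hσh]; simp
  -- linearity in the first variable, packaged
  let φ : M → M →ₗ[O] F := fun n =>
    { toFun := fun m => h m n
      map_add' := fun a c => haddl a c n
      map_smul' := fun a m => by
        simp only [RingHom.id_apply]
        rw [hsmull, Algebra.smul_def] }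
  have hφ : ∀ m n : M, h m n = φ n m := fun _ _ => rfl
  have hsub : ∀ m n p : M, h (m - n) p = h m p - h n p := by
    intro m n p; rw [hφ, hφ, hφ, map_sub]
  have hexp : ∀ m n : M, h m n = ∑ i, algebraMap O F (b.repr m i) * h (b i) n := by
    intro m n
    conv_lhs => rw [hφ, show m = ∑ i, b.repr m i • b i from (b.sum_repr m).symm]
    rw [map_sum]
    refine Finset.sum_congr rfl fun i _ => ?_
    rw [map_smul, Algebra.smul_def]; rfl
  -- values against basis vectors (second slot)
  have hval0 : ∀ (n : M) (k : Fin s),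
      h n (b (k,0)) = algebraMap O F (b.repr n (k,1)) * (-(algebraMap O F π)⁻¹) := by
    intro n k
    rw [hexp]
    rw [Finset.sum_eq_single ((k,1) : Fin s × Fin 2)]
    · rw [hb]; simp [hypGram]
    · rintro ⟨j1, j2⟩ - hj
      rw [hb]
      fin_cases j2
      · simp [hypGram]
      · have hne : j1 ≠ k := fun hk => hj (by simp [hk])
        simp [hypGram, hne]
    · intro hmem; exact absurd (Finset.mem_univ _) hmem
  have hval1 : ∀ (n : M) (k : Fin s),
      h n (b (k,1)) = algebraMap O F (b.repr n (k,0)) * (algebraMap O F π)⁻¹ := by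
    intro n k
    rw [hexp]
    rw [Finset.sum_eq_single ((k,0) : Fin s × Fin 2)]
    · rw [hb]; simp [hypGram]
    · rintro ⟨j1, j2⟩ - hj
      rw [hb]
      fin_cases j2
      · have hne : j1 ≠ k := fun hk => hj (by simp [hk])
        simp [hypGram, hne]
      · simp [hypGram]
    · intro hmem; exact absurd (Finset.mem_univ _) hmem
  have σinvπ : σ ((algebraMap O F π)⁻¹) = -(algebraMap O F π)⁻¹ := by
    rw [map_inv₀, hσπ, inv_neg]
  -- values against basis vectors (first slot)
  have hval0' : ∀ (n : M) (k : Fin s),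
      h (b (k,0)) n = algebraMap O F (σh (b.repr n (k,1))) * (algebraMap O F π)⁻¹ := by
    intro n k
    rw [hconj n (b (k,0)), hval0, map_mul, hσh, map_neg, σinvπ, neg_neg]
  have hval1' : ∀ (n : M) (k : Fin s),
      h (b (k,1)) n = algebraMap O F (σh (b.repr n (k,0))) * (-(algebraMap O F π)⁻¹) := by
    intro n k
    rw [hconj n (b (k,1)), hval1, map_mul, hσh, σinvπ]
  -- integrality: all values of h lie in π⁻¹ O
  have hbint : ∀ (n : M) (i : Fin s × Fin 2), ∃ a : O,
      h (b i) n = algebraMap O F a * (algebraMap O F π)⁻¹ := by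
    rintro n ⟨k, t⟩
    fin_cases t
    · exact ⟨σh (b.repr n (k,1)), hval0' n k⟩
    · refine ⟨-(σh (b.repr n (k,0))), ?_⟩
      show h (b (k,1)) n = _
      rw [hval1' n k, map_neg]; ring
  choose A hA using hbint
  have hint : ∀ m n : M, ∃ a : O, h m n = algebraMap O F a * (algebraMap O F π)⁻¹ := by
    intro m n
    refine ⟨∑ i, b.repr m i * A n i, ?_⟩
    rw [hexp m n, map_sum, Finset.sum_mul]
    exact Finset.sum_congr rfl fun i _ => by rw [hA, map_mul, mul_assoc]
  -- some coordinate of x is a unit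
  obtain ⟨u, huu, hux⟩ := hx
  have hunit : ∃ i, IsUnit (b.repr x i) := by
    by_contra hcon
    push_neg at hcon
    have hdvd : ∀ i, π ∣ b.repr x i := by
      intro i
      have h1 := (IsDiscreteValuationRing.irreducible_iff_uniformizer π).mp hπ
      have h2 : b.repr x i ∈ IsLocalRing.maximalIdeal O :=
        (IsLocalRing.mem_maximalIdeal _).mpr (mem_nonunits_iff.mpr (hcon i))
      rw [h1, Ideal.mem_span_singleton] at h2
      exact h2
    choose e he using hdvd
    have hx' : x = π • (∑ i, e i • b i) := by
      conv_lhs => rw [(b.sum_repr x).symm]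
      rw [Finset.smul_sum]
      exact Finset.sum_congr rfl fun i _ => by rw [smul_smul, ← he]
    set x' : M := ∑ i, e i • b i with hx'def
    obtain ⟨a, ha⟩ := hint x' x'
    have hfix : σ (h x' x') = h x' x' := (hconj x' x').symm
    have hxx : h x x = -(algebraMap O F π * algebraMap O F a) := by
      rw [hx', hsmull, hconj (π • x') x', hsmull, map_mul, hσπ, hfix, ha]
      field_simp
    have hu2 : u = -(π * a) := by
      apply hinj
      rw [hux, hxx, map_neg, map_mul]
    have : IsUnit π := isUnit_of_dvd_unit ⟨-a, by rw [hu2]; ring⟩ huu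
    exact hπ.not_isUnit this
  -- there is m₀ with h m₀ x = π⁻¹
  have hm0 : ∃ m₀ : M, h m₀ x = (algebraMap O F π)⁻¹ := by
    obtain ⟨⟨k, t⟩, hct⟩ := hunit
    have σunit : ∀ a : O, IsUnit a → ∃ v : O, σh a * v = 1 := by
      intro a ha
      obtain ⟨v, hv⟩ := isUnit_iff_exists_inv.mp ha
      exact ⟨σh v, by rw [← σmul, hv, σone]⟩
    fin_cases t
    · -- b.repr x (k,0) is a unit; use b (k,1)
      obtain ⟨v, hv⟩ := σunit _ hct
      refine ⟨(-v) • b (k,1), ?_⟩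
      rw [hsmull, hval1' x k, map_neg]
      have hv' : σh (b.repr x (k,0)) * v = 1 := hv
      have h1 : algebraMap O F (σh (b.repr x (k,0))) * algebraMap O F v = 1 := by
        rw [← map_mul, hv', map_one]
      linear_combination (algebraMap O F π)⁻¹ * h1
    · -- b.repr x (k,1) is a unit; use b (k,0)
      obtain ⟨v, hv⟩ := σunit _ hct
      refine ⟨v • b (k,0), ?_⟩
      rw [hsmull, hval0' x k]
      have hv' : σh (b.repr x (k,1)) * v = 1 := hv
      have h1 : algebraMap O F (σh (b.repr x (k,1))) * algebraMap O F v = 1 := by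
        rw [← map_mul, hv', map_one]
      linear_combination (algebraMap O F π)⁻¹ * h1
  obtain ⟨m₀, hm₀⟩ := hm0
  have hpow : algebraMap O F (π ^ (2*d)) * (algebraMap O F π)⁻¹
      = algebraMap O F (π ^ (2*d-1)) := by
    have h2d : π ^ (2*d) = π ^ (2*d-1) * π := by
      rw [← pow_succ]; congr 1; omega
    rw [h2d, map_mul, mul_assoc, mul_inv_cancel₀ hπF0, mul_one]
  -- part 1
  have part1 : ∀ y : M,
      (∃ a : O, h y x = algebraMap O F (π ^ (2 * d - 1)) * algebraMap O F a) →
      ∃ z : M, h z x = 0 ∧ ∃ m : M, y - z = π ^ (2 * d) • m := by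
    rintro y ⟨a, hy⟩
    refine ⟨y - (π ^ (2*d) * a) • m₀, ?_, a • m₀, ?_⟩
    · rw [hsub, hy, hsmull, hm₀, map_mul]
      linear_combination (-(algebraMap O F a)) * hpow
    · rw [sub_sub_cancel, mul_smul]
  -- part 2
  have part2 : ∀ z : M, h z x = 0 → (∃ m : M, z = π ^ (2 * d) • m) →
      ∃ w : M, h w x = 0 ∧ z = π ^ (2 * d) • w := by
    rintro z hz ⟨m, rfl⟩
    refine ⟨m, ?_, rfl⟩
    rw [hsmull] at hz
    have hne : algebraMap O F (π ^ (2*d)) ≠ 0 := by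
      rw [map_pow]; exact pow_ne_zero _ hπF0
    exact (mul_eq_zero.mp hz).resolve_left hne
  refine ⟨part1, part2, fun y => ⟨?_, part1 y⟩⟩
  rintro ⟨z, hz, m, hm⟩
  obtain ⟨a, ha⟩ := hint m x
  refine ⟨a, ?_⟩
  have hy : y = z + π ^ (2*d) • m := by
    rw [← hm]; abel
  rw [hy, haddl, hz, hsmull, ha, zero_add]
  linear_combination (algebraMap O F a) * hpow
end
end
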